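/- arXiv:1912.06428 — 2 statements merged into one kernel-verified Lean document; each statement's English description precedes it below -/
import Mathlib

section
/- For every integer cap C ≥ 1 and every price floor p ≥ 0, the truth-telling expected welfare satisfies the decomposition bound W(M(C,p)) ≤ (1A) + (1B) + (1C). -/
open MeasureTheory ProbabilityTheory

noncomputable section

/-- The marginal value of the `j`-th license under the curve `V`. -/
def marg (V : ℕ → ℝ) (j : ℕ) : ℝ := V j - V (j - 1)

/-- A valuation curve: `V 0 = 0`, nondecreasing, nonincreasing marginal values,
and only finitely many nonzero marginal values. -/
def IsValuation (V : ℕ → ℝ) : Prop :=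
  V 0 = 0 ∧ Monotone V ∧ (∀ j : ℕ, 1 ≤ j → marg V (j + 1) ≤ marg V j) ∧
    ∃ N : ℕ, ∀ j : ℕ, N ≤ j → marg V j = 0

/-- A social cost function: `Q 0 = 0`, nondecreasing, and (discretely) convex. -/
def IsCost (Q : ℕ → ℝ) : Prop :=
  Q 0 = 0 ∧ Monotone Q ∧ ∀ x : ℕ, 1 ≤ x → Q x - Q (x - 1) ≤ Q (x + 1) - Q x

/-- The demand of a valuation curve at price `p`:
`sup { j ≥ 1 : marg V j ≥ p } ∈ ℕ ∪ {∞}` (with `sup ∅ = 0`). -/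
def dem (V : ℕ → ℝ) (p : ℝ) : ℕ∞ :=
  sSup {j : ℕ∞ | ∃ k : ℕ, j = (k : ℕ∞) ∧ 1 ≤ k ∧ p ≤ marg V k}

/-- Number of licenses sold to curve `V` under cap `C` (possibly `∞`) and price floor `p`. -/
def sold (C : ℕ∞) (p : ℝ) (V : ℕ → ℝ) : ℕ := (min C (dem V p)).toNat

/-- The safe price for cap `C`: the average social cost `Q C / C` per license. -/
def safeP (Q : ℕ → ℝ) (C : ℕ) : ℝ := Q C / C

/-- Truth-telling expected welfare of the no-ceiling cap-and-price auction `M(C,p)`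
for a distribution `F` over (combined) valuation curves. -/
def Wfl (F : Measure (ℕ → ℝ)) (Q : ℕ → ℝ) (C : ℕ∞) (p : ℝ) : ℝ :=
  ∫ V, (V (sold C p V) - Q (sold C p V)) ∂F

/-- Number of licenses sold under cap `C`, price floor `p`, and price ceiling `pbar`. -/
def xceil (C : ℕ) (p pbar : ℝ) (V : ℕ → ℝ) : ℕ :=
  if (C : ℕ∞) ≤ dem V pbar then (dem V pbar).toNat else sold (C : ℕ∞) p V

/-- Truth-telling expected welfare of the cap-and-price auction `M(C,p,pbar)`. -/
def Wceil (F : Measure (ℕ → ℝ)) (Q : ℕ → ℝ) (C : ℕ) (p pbar : ℝ) : ℝ :=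
  ∫ V, (V (xceil C p pbar V) - Q (xceil C p pbar V)) ∂F

/-- The combined valuation curve of a profile of valuation curves. -/
def comb {n : ℕ} (Vp : Fin n → ℕ → ℝ) (x : ℕ) : ℝ :=
  sSup {s : ℝ | ∃ y : Fin n → ℕ, (∑ i, y i) = x ∧ s = ∑ i, Vp i (y i)}

open Classical in
/-- Product of a family of probability measures (0 if the family fails to consist
of probability measures). -/
def piProb {ι : Type*} [Fintype ι] {α : ι → Type*} [∀ i, MeasurableSpace (α i)]
    (μ : ∀ i, Measure (α i)) : Measure (∀ i, α i) :=
  if h : ∀ i, IsProbabilityMeasure (μ i) then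
    haveI := h
    Measure.pi μ
  else 0

/-- Truth-telling expected welfare of `M(C,p)` for independent firms with
valuation distributions `F i`, computed via the combined valuation curve. -/
def Wcomb {n : ℕ} (F : Fin n → Measure (ℕ → ℝ)) (Q : ℕ → ℝ) (C : ℕ∞) (p : ℝ) : ℝ :=
  ∫ Vp, (comb Vp (sold C p (comb Vp)) - Q (sold C p (comb Vp))) ∂(piProb F)

/-- Truth-telling expected welfare of `M(C,p,pbar)` for independent firms. -/
def WceilComb {n : ℕ} (F : Fin n → Measure (ℕ → ℝ)) (Q : ℕ → ℝ) (C : ℕ) (p pbar : ℝ) : ℝ :=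
  ∫ Vp, (comb Vp (xceil C p pbar (comb Vp)) - Q (xceil C p pbar (comb Vp))) ∂(piProb F)

/-- `W^{(1)}`: the expected optimal welfare from allocating licenses to a single firm. -/
def W1 {n : ℕ} (F : Fin n → Measure (ℕ → ℝ)) (Q : ℕ → ℝ) : ℝ :=
  ∫ Vp, sSup {w : ℝ | ∃ (i : Fin n) (x : ℕ), w = Vp i x - Q x} ∂(piProb F)

/-- The per-license price in the uniform-price auction with cap `C` and floor `pf`,
given a bid profile `b`. -/
def priceOf {n : ℕ} (C : ℕ) (pf : ℝ) (b : Fin n → ℕ → ℝ) : ℝ :=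
  if (∑ i, dem (b i) pf) < (C : ℕ∞) then pf else comb b C - comb b (C - 1)

/-- A (measurable) tie-breaking allocation rule for the uniform-price auction with
cap `C` and price floor `pf`. -/
def IsAllocRule {n : ℕ} (C : ℕ) (pf : ℝ) (alloc : (Fin n → ℕ → ℝ) → Fin n → ℕ) : Prop :=
  Measurable alloc ∧
    ∀ b : Fin n → ℕ → ℝ, (∀ i, IsValuation (b i)) →
      (((∑ i, dem (b i) pf) < (C : ℕ∞)) → ∀ i, alloc b i = (dem (b i) pf).toNat) ∧
      (((C : ℕ∞) ≤ ∑ i, dem (b i) pf) →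
        (∑ i, alloc b i) = C ∧
          ∀ y : Fin n → ℕ, (∑ i, y i) = C → (∑ i, b i (y i)) ≤ ∑ i, b i (alloc b i))

/-- The strategy `σi` never overbids: with probability one the bid is a valuation
curve pointwise below the true valuation. -/
def NoOverbid (σi : Kernel (ℕ → ℝ) (ℕ → ℝ)) : Prop :=
  ∀ V : ℕ → ℝ, IsValuation V → σi V {B | IsValuation B ∧ ∀ x, B x ≤ V x} = 1

/-- Expected welfare when the firms play the (randomized) strategy profile `σ`. -/
def EqWelfare {n : ℕ} (F : Fin n → Measure (ℕ → ℝ)) (σ : Fin n → Kernel (ℕ → ℝ) (ℕ → ℝ))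
    (alloc : (Fin n → ℕ → ℝ) → Fin n → ℕ) (Q : ℕ → ℝ) : ℝ :=
  ∫ Vp, (∫ b, ((∑ i, Vp i (alloc b i)) - Q (∑ i, alloc b i))
      ∂(piProb fun j => σ j (Vp j))) ∂(piProb F)

/-- Expected utility of firm `i` with valuation `Vi` when every firm plays `σ`. -/
def EUeq {n : ℕ} (F : Fin n → Measure (ℕ → ℝ)) (σ : Fin n → Kernel (ℕ → ℝ) (ℕ → ℝ))
    (alloc : (Fin n → ℕ → ℝ) → Fin n → ℕ) (C : ℕ) (pf : ℝ) (i : Fin n) (Vi : ℕ → ℝ) : ℝ :=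
  ∫ Vp, (∫ b, (Vi (alloc b i) - priceOf C pf b * (alloc b i : ℝ))
      ∂(piProb fun j => σ j (Function.update Vp i Vi j))) ∂(piProb F)

/-- Expected utility of firm `i` with valuation `Vi` deviating to the fixed bid `Bt`
while the others play `σ`. -/
def EUdev {n : ℕ} (F : Fin n → Measure (ℕ → ℝ)) (σ : Fin n → Kernel (ℕ → ℝ) (ℕ → ℝ))
    (alloc : (Fin n → ℕ → ℝ) → Fin n → ℕ) (C : ℕ) (pf : ℝ) (i : Fin n) (Vi Bt : ℕ → ℝ) : ℝ :=
  ∫ Vp, (∫ b, (Vi (alloc b i) - priceOf C pf b * (alloc b i : ℝ))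
      ∂(piProb fun j => if j = i then Measure.dirac Bt else σ j (Vp j))) ∂(piProb F)

/-- Bayes–Nash equilibrium of the uniform-price auction with cap `C` and floor `pf`. -/
def IsBNE {n : ℕ} (F : Fin n → Measure (ℕ → ℝ)) (σ : Fin n → Kernel (ℕ → ℝ) (ℕ → ℝ))
    (alloc : (Fin n → ℕ → ℝ) → Fin n → ℕ) (C : ℕ) (pf : ℝ) : Prop :=
  ∀ (i : Fin n) (Vi : ℕ → ℝ), IsValuation Vi → ∀ Bt : ℕ → ℝ, IsValuation Bt →
    EUdev F σ alloc C pf i Vi Bt ≤ EUeq F σ alloc C pf i Vi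

/-- `θ_V = min( d_V(p), d_V(P(C)) )`, as a natural number. -/
def thetaN (Q : ℕ → ℝ) (C : ℕ) (p : ℝ) (V : ℕ → ℝ) : ℕ :=
  (min (dem V p) (dem V (safeP Q C))).toNat


section Aux

lemma enat_eq_iff {a : ℕ∞} (h : a ≠ ⊤) (k : ℕ) :
    a = (k : ℕ∞) ↔ ((k : ℕ∞) ≤ a ∧ ¬ (((k + 1 : ℕ) : ℕ∞) ≤ a)) := by
  lift a to ℕ using h
  simp only [Nat.cast_le, Nat.cast_inj]
  omega

lemma toNat_eq_iffE {a : ℕ∞} (h : a ≠ ⊤) (k : ℕ) :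
    a.toNat = k ↔ ((k : ℕ∞) ≤ a ∧ ¬ (((k + 1 : ℕ) : ℕ∞) ≤ a)) := by
  lift a to ℕ using h
  simp only [ENat.toNat_coe, Nat.cast_le]
  omega

lemma le_toNat_iffE {a : ℕ∞} (h : a ≠ ⊤) (k : ℕ) : k ≤ a.toNat ↔ (k : ℕ∞) ≤ a := by
  lift a to ℕ using h
  simp

lemma le_dem_iff (V : ℕ → ℝ) (q : ℝ) (n : ℕ) (hn : 1 ≤ n) :
    (n : ℕ∞) ≤ dem V q ↔ ∃ k : ℕ, n ≤ k ∧ q ≤ marg V k := by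
  constructor
  · intro h
    by_contra hc
    push_neg at hc
    have hsup : dem V q ≤ ((n - 1 : ℕ) : ℕ∞) := by
      apply sSup_le
      rintro j ⟨k, rfl, hk1, hqk⟩
      have hkn : k < n := by
        by_contra hkn
        push_neg at hkn
        exact absurd hqk (not_le.mpr (hc k hkn))
      exact_mod_cast Nat.le_sub_one_of_lt hkn
    have h2 : (n : ℕ∞) ≤ ((n - 1 : ℕ) : ℕ∞) := h.trans hsup
    have : n ≤ n - 1 := by exact_mod_cast h2
    omega
  · rintro ⟨k, hk, hq⟩
    have hmem : (k : ℕ∞) ∈ {j : ℕ∞ | ∃ k' : ℕ, j = (k' : ℕ∞) ∧ 1 ≤ k' ∧ q ≤ marg V k'} :=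
      ⟨k, rfl, hn.trans hk, hq⟩
    exact le_trans (by exact_mod_cast hk) (le_sSup hmem)

lemma measA (q : ℝ) (n : ℕ) : MeasurableSet {V : ℕ → ℝ | (n : ℕ∞) ≤ dem V q} := by
  rcases Nat.eq_zero_or_pos n with h | h
  · subst h
    have : {V : ℕ → ℝ | ((0 : ℕ) : ℕ∞) ≤ dem V q} = Set.univ := by
      ext V; simp
    rw [this]; exact MeasurableSet.univ
  · have : {V : ℕ → ℝ | (n : ℕ∞) ≤ dem V q} = ⋃ k : ℕ, {V : ℕ → ℝ | n ≤ k ∧ q ≤ marg V k} := by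
      ext V
      simp only [Set.mem_setOf_eq, Set.mem_iUnion, le_dem_iff V q n h]
    rw [this]
    apply MeasurableSet.iUnion
    intro k
    by_cases hk : n ≤ k
    · have : {V : ℕ → ℝ | n ≤ k ∧ q ≤ marg V k} = {V : ℕ → ℝ | q ≤ marg V k} := by
        ext V; simp [hk]
      rw [this]
      exact measurableSet_le measurable_const
        ((measurable_pi_apply k).sub (measurable_pi_apply (k - 1)))
    · have : {V : ℕ → ℝ | n ≤ k ∧ q ≤ marg V k} = ∅ := by
        ext V; simp [hk]
      rw [this]; exact MeasurableSet.empty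

lemma Q_inc_mono {Q : ℕ → ℝ} (hQ : IsCost Q) :
    ∀ a b : ℕ, a ≤ b → Q (a + 1) - Q a ≤ Q (b + 1) - Q b := by
  have step : ∀ y : ℕ, Q (y + 1) - Q y ≤ Q (y + 2) - Q (y + 1) := by
    intro y
    have := hQ.2.2 (y + 1) (by omega)
    simpa using this
  intro a b hab
  induction b with
  | zero => simp [Nat.le_zero.mp hab]
  | succ n ih =>
    rcases Nat.lt_or_ge a (n + 1) with h | h
    · exact le_trans (ih (by omega)) (by simpa using step n)
    · have : a = n + 1 := by omega
      subst this; rfl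

lemma Q_superadd {Q : ℕ → ℝ} (hQ : IsCost Q) : ∀ a b : ℕ, Q a + Q b ≤ Q (a + b) := by
  intro a
  induction a with
  | zero => intro b; simp [hQ.1]
  | succ n ih =>
    intro b
    have h1 := ih b
    have h2 := Q_inc_mono hQ n (n + b) (by omega)
    have h3 : n + 1 + b = n + b + 1 := by omega
    rw [h3]
    linarith

lemma dem_ne_top_of_lt {W : ℕ → ℝ} {p : ℝ} {C : ℕ} (h : dem W p < (C : ℕ∞)) :
    dem W p ≠ ⊤ :=
  (lt_of_lt_of_le h le_top).ne

lemma min_dem_ne_top {W : ℕ → ℝ} {p q : ℝ} {C : ℕ} (h : dem W p < (C : ℕ∞)) :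
    min (dem W p) (dem W q) ≠ ⊤ :=
  (lt_of_le_of_lt (min_le_left _ _) (lt_of_lt_of_le h le_top)).ne

lemma theta_eq_iff {Q : ℕ → ℝ} {C : ℕ} {p : ℝ} {W : ℕ → ℝ} {k : ℕ}
    (hlt : dem W p < (C : ℕ∞)) :
    thetaN Q C p W = k ↔
      (((k : ℕ∞) ≤ dem W p ∧ (k : ℕ∞) ≤ dem W (safeP Q C)) ∧
        ¬ (((k + 1 : ℕ) : ℕ∞) ≤ dem W p ∧ ((k + 1 : ℕ) : ℕ∞) ≤ dem W (safeP Q C))) := by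
  rw [thetaN, toNat_eq_iffE (min_dem_ne_top hlt), le_min_iff, le_min_iff]

lemma demToNat_eq_iff {p : ℝ} {W : ℕ → ℝ} {C k : ℕ} (hlt : dem W p < (C : ℕ∞)) :
    (dem W p).toNat = k ↔
      ((k : ℕ∞) ≤ dem W p ∧ dem W p < ((k + 1 : ℕ) : ℕ∞)) := by
  rw [toNat_eq_iffE (dem_ne_top_of_lt hlt) k, not_le]

lemma integrable_cases {F : Measure (ℕ → ℝ)} {ι : Type*} (t : Finset ι)
    (s : ι → Set (ℕ → ℝ)) (ψ : ι → (ℕ → ℝ) → ℝ)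
    (hs : ∀ k ∈ t, MeasurableSet (s k)) (hψ : ∀ k ∈ t, Integrable (ψ k) F)
    (g : (ℕ → ℝ) → ℝ) (heq : ∀ V, g V = ∑ k ∈ t, (s k).indicator (ψ k) V) :
    Integrable g F := by
  have hg : g = fun V => ∑ k ∈ t, (s k).indicator (ψ k) V := funext heq
  rw [hg]
  exact integrable_finset_sum t fun k hk => (hψ k hk).indicator (hs k hk)

lemma pointwise_bound {Q : ℕ → ℝ} (hQ : IsCost Q) (C : ℕ) (p : ℝ) (V : ℕ → ℝ) :
    V (sold (C : ℕ∞) p V) - Q (sold (C : ℕ∞) p V) ≤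
      (if (C : ℕ∞) ≤ dem V p then V C - Q C else 0) +
      (if dem V p < (C : ℕ∞) then V (thetaN Q C p V) - Q (thetaN Q C p V) else 0) +
      (if dem V p < (C : ℕ∞) then
          V ((dem V p).toNat) - V (thetaN Q C p V) - Q ((dem V p).toNat - thetaN Q C p V)
        else 0) := by
  by_cases h : (C : ℕ∞) ≤ dem V p
  · have hsold : sold (C : ℕ∞) p V = C := by
      rw [sold, min_eq_left h, ENat.toNat_coe]
    rw [hsold, if_pos h, if_neg (not_lt.mpr h), if_neg (not_lt.mpr h)]
    simp
  · have hlt : dem V p < (C : ℕ∞) := not_le.mp h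
    have hne : dem V p ≠ ⊤ := dem_ne_top_of_lt hlt
    have hsold : sold (C : ℕ∞) p V = (dem V p).toNat := by
      rw [sold, min_eq_right hlt.le]
    have hθ : thetaN Q C p V ≤ (dem V p).toNat :=
      ENat.toNat_le_toNat (min_le_left _ _) hne
    rw [hsold, if_neg h, if_pos hlt, if_pos hlt]
    have hQs : Q (thetaN Q C p V) + Q ((dem V p).toNat - thetaN Q C p V) ≤
        Q ((dem V p).toNat) := by
      have := Q_superadd hQ (thetaN Q C p V) ((dem V p).toNat - thetaN Q C p V)
      rwa [Nat.add_sub_cancel' hθ] at this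
    linarith

end Aux

/-- the welfare decomposition bound `W(M(C,p)) ≤ (1A) + (1B) + (1C)`. -/
theorem stmt6 (F : Measure (ℕ → ℝ)) (hprob : IsProbabilityMeasure F)
    (hval : F {V | IsValuation V} = 1)
    (hint : ∀ x : ℕ, Integrable (fun V : ℕ → ℝ => V x) F)
    (Q : ℕ → ℝ) (hQ : IsCost Q)
    (C : ℕ) (hC : 1 ≤ C) (p : ℝ) (hp : 0 ≤ p) :
    Wfl F Q (C : ℕ∞) p ≤
      (∫ V, (if (C : ℕ∞) ≤ dem V p then V C - Q C else 0) ∂F) +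
      (∫ V, (if dem V p < (C : ℕ∞) then
          V (thetaN Q C p V) - Q (thetaN Q C p V) else 0) ∂F) +
      (∫ V, (if dem V p < (C : ℕ∞) then
          V ((dem V p).toNat) - V (thetaN Q C p V) - Q ((dem V p).toNat - thetaN Q C p V)
        else 0) ∂F) := by
  classical
  have hCne : ((C : ℕ) : ℕ∞) ≠ ⊤ := ENat.coe_ne_top C
  have h1 : Integrable (fun V : ℕ → ℝ => if (C : ℕ∞) ≤ dem V p then V C - Q C else 0) F := by
    have he : (fun V : ℕ → ℝ => if (C : ℕ∞) ≤ dem V p then V C - Q C else 0) =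
        Set.indicator {V : ℕ → ℝ | (C : ℕ∞) ≤ dem V p} (fun V => V C - Q C) := by
      funext V
      simp [Set.indicator_apply]
    rw [he]
    exact ((hint C).sub (integrable_const _)).indicator (measA p C)
  have hsold_le : ∀ V : ℕ → ℝ, sold (C : ℕ∞) p V ≤ C := by
    intro V
    have := ENat.toNat_le_toNat (min_le_left ((C : ℕ∞)) (dem V p)) hCne
    simpa [sold] using this
  have hθle : ∀ V : ℕ → ℝ, dem V p < (C : ℕ∞) → thetaN Q C p V ≤ C := by
    intro V hlt
    have := ENat.toNat_le_toNat
      (le_trans (min_le_left (dem V p) (dem V (safeP Q C))) hlt.le) hCne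
    simpa [thetaN] using this
  have hnle : ∀ V : ℕ → ℝ, dem V p < (C : ℕ∞) → (dem V p).toNat ≤ C := by
    intro V hlt
    have := ENat.toNat_le_toNat hlt.le hCne
    simpa using this
  have hg : Integrable
      (fun V : ℕ → ℝ => V (sold (C : ℕ∞) p V) - Q (sold (C : ℕ∞) p V)) F := by
    apply integrable_cases (Finset.range (C + 1))
      (fun k => {W : ℕ → ℝ | sold (C : ℕ∞) p W = k}) (fun k W => W k - Q k)
    · intro k _
      have hset : {W : ℕ → ℝ | sold (C : ℕ∞) p W = k} =
          ({W : ℕ → ℝ | ((k : ℕ) : ℕ∞) ≤ (C : ℕ∞)} ∩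
            {W : ℕ → ℝ | ((k : ℕ) : ℕ∞) ≤ dem W p}) \
          ({W : ℕ → ℝ | ((k + 1 : ℕ) : ℕ∞) ≤ (C : ℕ∞)} ∩
            {W : ℕ → ℝ | ((k + 1 : ℕ) : ℕ∞) ≤ dem W p}) := by
        ext W
        simp only [Set.mem_setOf_eq, Set.mem_inter_iff, Set.mem_diff]
        rw [sold, toNat_eq_iffE (ne_top_of_le_ne_top hCne (min_le_left _ _)),
          le_min_iff, le_min_iff]
      rw [hset]
      exact ((MeasurableSet.const _).inter (measA p k)).diff
        ((MeasurableSet.const _).inter (measA p (k + 1)))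
    · intro k _
      exact (hint k).sub (integrable_const _)
    · intro V
      have hmem : sold (C : ℕ∞) p V ∈ Finset.range (C + 1) :=
        Finset.mem_range.mpr (Nat.lt_succ_of_le (hsold_le V))
      have hz : ∀ b ∈ Finset.range (C + 1), b ≠ sold (C : ℕ∞) p V →
          Set.indicator {W : ℕ → ℝ | sold (C : ℕ∞) p W = b} (fun W => W b - Q b) V = 0 :=
        by
          intro b _ hb
          apply Set.indicator_of_notMem
          exact fun hm => hb (Eq.symm hm)
      rw [Finset.sum_eq_single_of_mem _ hmem hz]
      symm
      apply Set.indicator_of_mem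
      exact rfl
  have h2 : Integrable (fun V : ℕ → ℝ => if dem V p < (C : ℕ∞) then
      V (thetaN Q C p V) - Q (thetaN Q C p V) else 0) F := by
    apply integrable_cases (Finset.range (C + 1))
      (fun k => {W : ℕ → ℝ | dem W p < (C : ℕ∞) ∧ thetaN Q C p W = k})
      (fun k W => W k - Q k)
    · intro k _
      have hset : {W : ℕ → ℝ | dem W p < (C : ℕ∞) ∧ thetaN Q C p W = k} =
          {W : ℕ → ℝ | (C : ℕ∞) ≤ dem W p}ᶜ ∩
          (({W : ℕ → ℝ | ((k : ℕ) : ℕ∞) ≤ dem W p} ∩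
            {W : ℕ → ℝ | ((k : ℕ) : ℕ∞) ≤ dem W (safeP Q C)}) \
           ({W : ℕ → ℝ | ((k + 1 : ℕ) : ℕ∞) ≤ dem W p} ∩
            {W : ℕ → ℝ | ((k + 1 : ℕ) : ℕ∞) ≤ dem W (safeP Q C)})) := by
        ext W
        simp only [Set.mem_setOf_eq, Set.mem_inter_iff, Set.mem_diff,
          Set.mem_compl_iff, not_le]
        exact and_congr_right fun hlt => theta_eq_iff hlt
      rw [hset]
      exact (measA p C).compl.inter
        (((measA p k).inter (measA (safeP Q C) k)).diff
          ((measA p (k + 1)).inter (measA (safeP Q C) (k + 1))))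
    · intro k _
      exact (hint k).sub (integrable_const _)
    · intro V
      by_cases hlt : dem V p < (C : ℕ∞)
      · have hmem : thetaN Q C p V ∈ Finset.range (C + 1) :=
          Finset.mem_range.mpr (Nat.lt_succ_of_le (hθle V hlt))
        have hz : ∀ b ∈ Finset.range (C + 1), b ≠ thetaN Q C p V →
            Set.indicator {W : ℕ → ℝ | dem W p < (C : ℕ∞) ∧ thetaN Q C p W = b}
              (fun W => W b - Q b) V = 0 :=
          by
            intro b _ hb
            apply Set.indicator_of_notMem
            exact fun hm => hb hm.2.symm
        rw [if_pos hlt, Finset.sum_eq_single_of_mem _ hmem hz]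
        symm
        apply Set.indicator_of_mem
        exact ⟨hlt, rfl⟩
      · rw [if_neg hlt]
        exact (Finset.sum_eq_zero fun k _ =>
          Set.indicator_of_notMem (fun hm => hlt.elim hm.1) _).symm
  have h3 : Integrable (fun V : ℕ → ℝ => if dem V p < (C : ℕ∞) then
      V ((dem V p).toNat) - V (thetaN Q C p V) - Q ((dem V p).toNat - thetaN Q C p V)
    else 0) F := by
    apply integrable_cases (Finset.range (C + 1) ×ˢ Finset.range (C + 1))
      (fun kj => {W : ℕ → ℝ | dem W p < (C : ℕ∞) ∧
        (dem W p).toNat = kj.1 ∧ thetaN Q C p W = kj.2})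
      (fun kj W => W kj.1 - W kj.2 - Q (kj.1 - kj.2))
    · rintro ⟨k, j⟩ _
      have hset : {W : ℕ → ℝ | dem W p < (C : ℕ∞) ∧
          (dem W p).toNat = k ∧ thetaN Q C p W = j} =
          {W : ℕ → ℝ | (C : ℕ∞) ≤ dem W p}ᶜ ∩
          (({W : ℕ → ℝ | ((k : ℕ) : ℕ∞) ≤ dem W p} \
            {W : ℕ → ℝ | ((k + 1 : ℕ) : ℕ∞) ≤ dem W p}) ∩
           (({W : ℕ → ℝ | ((j : ℕ) : ℕ∞) ≤ dem W p} ∩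
             {W : ℕ → ℝ | ((j : ℕ) : ℕ∞) ≤ dem W (safeP Q C)}) \
            ({W : ℕ → ℝ | ((j + 1 : ℕ) : ℕ∞) ≤ dem W p} ∩
             {W : ℕ → ℝ | ((j + 1 : ℕ) : ℕ∞) ≤ dem W (safeP Q C)}))) := by
        ext W
        simp only [Set.mem_setOf_eq, Set.mem_inter_iff, Set.mem_diff,
          Set.mem_compl_iff, not_le]
        exact and_congr_right fun hlt =>
          and_congr (demToNat_eq_iff hlt) (theta_eq_iff hlt)
      rw [hset]
      exact (measA p C).compl.inter
        (((measA p k).diff (measA p (k + 1))).inter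
          (((measA p j).inter (measA (safeP Q C) j)).diff
            ((measA p (j + 1)).inter (measA (safeP Q C) (j + 1)))))
    · rintro ⟨k, j⟩ _
      exact ((hint k).sub (hint j)).sub (integrable_const _)
    · intro V
      by_cases hlt : dem V p < (C : ℕ∞)
      · have hmem : ((dem V p).toNat, thetaN Q C p V) ∈
            Finset.range (C + 1) ×ˢ Finset.range (C + 1) :=
          Finset.mem_product.mpr
            ⟨Finset.mem_range.mpr (Nat.lt_succ_of_le (hnle V hlt)),
             Finset.mem_range.mpr (Nat.lt_succ_of_le (hθle V hlt))⟩
        have hz : ∀ b ∈ Finset.range (C + 1) ×ˢ Finset.range (C + 1),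
            b ≠ ((dem V p).toNat, thetaN Q C p V) →
            Set.indicator {W : ℕ → ℝ | dem W p < (C : ℕ∞) ∧
                (dem W p).toNat = b.1 ∧ thetaN Q C p W = b.2}
              (fun W => W b.1 - W b.2 - Q (b.1 - b.2)) V = 0 :=
          by
            intro b _ hb
            apply Set.indicator_of_notMem
            exact fun hm => hb (by rw [hm.2.1, hm.2.2])
        rw [if_pos hlt, Finset.sum_eq_single_of_mem _ hmem hz]
        symm
        apply Set.indicator_of_mem
        exact ⟨hlt, rfl, rfl⟩
      · rw [if_neg hlt]
        exact (Finset.sum_eq_zero fun kj _ =>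
          Set.indicator_of_notMem (fun hm => hlt.elim hm.1) _).symm
  unfold Wfl
  refine le_trans (integral_mono hg ((h1.add h2).add h3) (pointwise_bound hQ C p)) ?_
  have h12 : Integrable (fun V : ℕ → ℝ =>
      (if (C : ℕ∞) ≤ dem V p then V C - Q C else 0) +
      (if dem V p < (C : ℕ∞) then V (thetaN Q C p V) - Q (thetaN Q C p V) else 0)) F :=
    h1.add h2
  simp only [Pi.add_apply]
  rw [integral_add h12 h3, integral_add h1 h2]

end
end

section
/- For every integer cap C ≥ 1 and every price floor p with 0 ≤ p ≤ P(C), the safe-price auction M(C) satisfies W(M(C)) ≥ (1A) + (1B). -/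
open MeasureTheory ProbabilityTheory

noncomputable section

lemma marg_meas (k : ℕ) : Measurable fun V : ℕ → ℝ => marg V k :=
  (measurable_pi_apply k).sub (measurable_pi_apply (k - 1))

lemma dem_ge_iff (V : ℕ → ℝ) (r : ℝ) {n : ℕ} (hn : 1 ≤ n) :
    (n : ℕ∞) ≤ dem V r ↔ ∃ k, n ≤ k ∧ r ≤ marg V k := by
  constructor
  · intro h
    by_contra hc
    push_neg at hc
    have hle : dem V r ≤ ((n - 1 : ℕ) : ℕ∞) := by
      apply sSup_le
      rintro j ⟨k, rfl, hk1, hrk⟩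
      have hkn : k < n := by
        by_contra hkn
        exact absurd hrk (not_le.2 (hc k (le_of_not_gt hkn)))
      exact_mod_cast (by omega : k ≤ n - 1)
    have h2 : (n : ℕ∞) ≤ ((n - 1 : ℕ) : ℕ∞) := h.trans hle
    have : n ≤ n - 1 := by exact_mod_cast h2
    omega
  · rintro ⟨k, hnk, hrk⟩
    calc (n : ℕ∞) ≤ (k : ℕ∞) := by exact_mod_cast hnk
      _ ≤ dem V r := le_sSup ⟨k, rfl, hn.trans hnk, hrk⟩

lemma dem_anti (V : ℕ → ℝ) {r s : ℝ} (h : r ≤ s) : dem V s ≤ dem V r := by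
  apply sSup_le_sSup
  rintro j ⟨k, rfl, hk1, hsk⟩
  exact ⟨k, rfl, hk1, h.trans hsk⟩

lemma meas_dem_ge (r : ℝ) {n : ℕ} (hn : 1 ≤ n) :
    MeasurableSet {V : ℕ → ℝ | (n : ℕ∞) ≤ dem V r} := by
  have h : {V : ℕ → ℝ | (n : ℕ∞) ≤ dem V r}
      = ⋃ k, ⋃ (_ : n ≤ k), {V : ℕ → ℝ | r ≤ marg V k} := by
    ext V
    simp only [Set.mem_setOf_eq, Set.mem_iUnion, dem_ge_iff V r hn]
    tauto
  rw [h]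
  exact MeasurableSet.iUnion fun k => MeasurableSet.iUnion fun _ =>
    measurableSet_le measurable_const (marg_meas k)

lemma min_toNat_le (C : ℕ) (a : ℕ∞) : (min (C : ℕ∞) a).toNat ≤ C := by
  have hne : min (C : ℕ∞) a ≠ ⊤ :=
    ne_top_of_le_ne_top (by simp) (min_le_left _ _)
  have hcoe : (((min (C : ℕ∞) a).toNat : ℕ) : ℕ∞) = min (C : ℕ∞) a := ENat.coe_toNat hne
  have h2 : (((min (C : ℕ∞) a).toNat : ℕ) : ℕ∞) ≤ (C : ℕ∞) := by
    rw [hcoe]; exact min_le_left _ _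
  exact_mod_cast h2

lemma toNat_le_of_lt_coe {a : ℕ∞} {C : ℕ} (h : a < (C : ℕ∞)) : a.toNat ≤ C := by
  have hne : a ≠ ⊤ := fun ht => by simp [ht] at h
  have hcoe : ((a.toNat : ℕ) : ℕ∞) = a := ENat.coe_toNat hne
  have : ((a.toNat : ℕ) : ℕ∞) < (C : ℕ∞) := hcoe ▸ h
  exact le_of_lt (by exact_mod_cast this)

lemma toNat_min_eq_card (C : ℕ) (a : ℕ∞) :
    (min (C : ℕ∞) a).toNat
      = ((Finset.Icc 1 C).filter (fun n : ℕ => (n : ℕ∞) ≤ a)).card := by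
  have hne : min (C : ℕ∞) a ≠ ⊤ :=
    ne_top_of_le_ne_top (by simp) (min_le_left _ _)
  set t := (min (C : ℕ∞) a).toNat with ht
  have hcoe : (t : ℕ∞) = min (C : ℕ∞) a := ENat.coe_toNat hne
  have htC : t ≤ C := min_toNat_le C a
  have hfil : (Finset.Icc 1 C).filter (fun n : ℕ => (n : ℕ∞) ≤ a) = Finset.Icc 1 t := by
    ext n
    simp only [Finset.mem_filter, Finset.mem_Icc]
    constructor
    · rintro ⟨⟨h1, h2⟩, h3⟩
      refine ⟨h1, ?_⟩
      have hnt : (n : ℕ∞) ≤ (t : ℕ∞) := by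
        rw [hcoe]; exact le_min (by exact_mod_cast h2) h3
      exact_mod_cast hnt
    · rintro ⟨h1, h2⟩
      have hnt : (n : ℕ∞) ≤ min (C : ℕ∞) a := by
        rw [← hcoe]; exact_mod_cast h2
      exact ⟨⟨h1, h2.trans htC⟩, hnt.trans (min_le_right _ _)⟩
  rw [hfil, Nat.card_Icc]
  omega

lemma meas_min_toNat (C : ℕ) (g : (ℕ → ℝ) → ℕ∞)
    (hg : ∀ n : ℕ, 1 ≤ n → MeasurableSet {V : ℕ → ℝ | (n : ℕ∞) ≤ g V}) :
    Measurable fun V => (min (C : ℕ∞) (g V)).toNat := by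
  have h : (fun V : ℕ → ℝ => (min (C : ℕ∞) (g V)).toNat)
      = fun V => ∑ n ∈ Finset.Icc 1 C, if (n : ℕ∞) ≤ g V then 1 else 0 := by
    funext V
    rw [toNat_min_eq_card, Finset.card_filter]
  rw [h]
  exact Finset.measurable_sum _ fun n hn =>
    Measurable.ite (hg n (Finset.mem_Icc.mp hn).1) measurable_const measurable_const

lemma meas_eval_comp (Q : ℕ → ℝ) {g : (ℕ → ℝ) → ℕ} (hg : Measurable g) :
    Measurable fun V : ℕ → ℝ => V (g V) - Q (g V) := by
  have h1 : Measurable fun q : (ℕ → ℝ) × ℕ => q.1 q.2 - Q q.2 :=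
    measurable_from_prod_countable_left fun k => by
      exact (measurable_pi_apply k).sub
        (measurable_const : Measurable fun _ : ℕ → ℝ => Q k)
  exact h1.comp (measurable_id.prodMk hg)
lemma cost_mul_le (Q : ℕ → ℝ) (hQ : IsCost Q) :
    ∀ n : ℕ, (Q n : ℝ) ≤ n * (Q (n + 1) - Q n) := by
  intro n
  induction n with
  | zero => simp [hQ.1]
  | succ n ih =>
    have hconv := hQ.2.2 (n + 1) (by omega)
    simp only [Nat.add_sub_cancel] at hconv
    push_cast
    nlinarith [mul_le_mul_of_nonneg_left hconv (by positivity : (0:ℝ) ≤ (n:ℝ) + 1)]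

lemma cost_avg (Q : ℕ → ℝ) (hQ : IsCost Q) :
    ∀ d K : ℕ, d ≤ K → (K : ℝ) * Q d ≤ (d : ℝ) * Q K := by
  intro d K hdK
  induction K, hdK using Nat.le_induction with
  | base => exact le_rfl
  | succ K hK ih =>
    have h2 : ((K : ℝ) + 1) * Q K ≤ (K : ℝ) * Q (K + 1) := by
      have := cost_mul_le Q hQ K
      nlinarith
    rcases Nat.eq_zero_or_pos d with hd | hd
    · subst hd; simp [hQ.1]
    · have hKpos : (0 : ℝ) < K := by
        have h1 : 1 ≤ K := le_trans hd hK
        exact_mod_cast h1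
      have hdp : (0:ℝ) ≤ d := Nat.cast_nonneg d
      push_cast
      nlinarith [mul_le_mul_of_nonneg_left ih (by positivity : (0:ℝ) ≤ (K:ℝ) + 1),
                 mul_le_mul_of_nonneg_left h2 hdp]

lemma tele_bound (V : ℕ → ℝ) (P : ℝ) (d K : ℕ)
    (hmarg : ∀ j, d + 1 ≤ j → j ≤ K → marg V j ≤ P) :
    ∀ n, d ≤ n → n ≤ K → V n ≤ V d + ((n : ℝ) - d) * P := by
  intro n hdn
  induction n, hdn using Nat.le_induction with
  | base => intro _; simp
  | succ n hn ih =>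
    intro hK
    have h1 := ih (by omega : n ≤ K)
    have h2 := hmarg (n + 1) (by omega) hK
    have h3 : marg V (n + 1) = V (n + 1) - V n := by simp [marg]
    push_cast
    nlinarith [h1, h2, h3]

lemma pointwise_key (Q : ℕ → ℝ) (hQ : IsCost Q) (C : ℕ) (hC : 1 ≤ C)
    (p : ℝ) (hple : p ≤ safeP Q C) (V : ℕ → ℝ) (hV : IsValuation V) :
    (if (C : ℕ∞) ≤ dem V p then V C - Q C else 0) +
      (if dem V p < (C : ℕ∞) then V (thetaN Q C p V) - Q (thetaN Q C p V) else 0)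
      ≤ V (sold (C : ℕ∞) (safeP Q C) V) - Q (sold (C : ℕ∞) (safeP Q C) V) := by
  have hD21 : dem V (safeP Q C) ≤ dem V p := dem_anti V hple
  by_cases hcase : (C : ℕ∞) ≤ dem V p
  · rw [if_pos hcase, if_neg (not_lt.2 hcase), add_zero]
    by_cases h2 : (C : ℕ∞) ≤ dem V (safeP Q C)
    · have hs : sold (C : ℕ∞) (safeP Q C) V = C := by
        simp [sold, min_eq_left h2]
      rw [hs]
    · push_neg at h2
      have hne : dem V (safeP Q C) ≠ ⊤ := fun h => by simp [h] at h2
      set d := (dem V (safeP Q C)).toNat with hd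
      have hcoe : (d : ℕ∞) = dem V (safeP Q C) := ENat.coe_toNat hne
      have hsold : sold (C : ℕ∞) (safeP Q C) V = d := by
        simp [sold, min_eq_right (le_of_lt h2), hd]
      rw [hsold]
      have hdC : d < C := by
        have hlt : (d : ℕ∞) < (C : ℕ∞) := hcoe ▸ h2
        exact_mod_cast hlt
      have hmarg : ∀ j, d + 1 ≤ j → j ≤ C → marg V j ≤ safeP Q C := by
        intro j hj _
        by_contra hcon
        push_neg at hcon
        have hjle : (j : ℕ∞) ≤ dem V (safeP Q C) :=
          le_sSup ⟨j, rfl, by omega, le_of_lt hcon⟩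
        rw [← hcoe] at hjle
        have : j ≤ d := by exact_mod_cast hjle
        omega
      have hVb := tele_bound V (safeP Q C) d C hmarg C (le_of_lt hdC) le_rfl
      have hQb := cost_avg Q hQ d C (le_of_lt hdC)
      have hCpos : (0:ℝ) < C := by exact_mod_cast hC
      have hQineq : ((C:ℝ) - (d:ℝ)) * safeP Q C ≤ Q C - Q d := by
        rw [safeP, ← mul_div_assoc, div_le_iff₀ hCpos]
        nlinarith [hQb]
      linarith [hVb, hQineq]
  · have hlt : dem V p < (C : ℕ∞) := not_le.1 hcase
    rw [if_neg hcase, if_pos hlt, zero_add]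
    have hmin : min (dem V p) (dem V (safeP Q C)) = dem V (safeP Q C) :=
      min_eq_right hD21
    have h2C : dem V (safeP Q C) < (C : ℕ∞) := lt_of_le_of_lt hD21 hlt
    have heq : thetaN Q C p V = sold (C : ℕ∞) (safeP Q C) V := by
      simp [thetaN, sold, hmin, min_eq_right (le_of_lt h2C)]
    rw [heq]

lemma meas_isval : MeasurableSet {V : ℕ → ℝ | IsValuation V} := by
  have h1 : MeasurableSet {V : ℕ → ℝ | V 0 = 0} :=
    (measurable_pi_apply 0) (measurableSet_singleton 0)
  have h2 : MeasurableSet {V : ℕ → ℝ | Monotone V} := by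
    have h : {V : ℕ → ℝ | Monotone V} = ⋂ n, {V : ℕ → ℝ | V n ≤ V (n + 1)} := by
      ext V
      simp only [Set.mem_setOf_eq, Set.mem_iInter]
      exact ⟨fun h n => h (Nat.le_succ n), monotone_nat_of_le_succ⟩
    rw [h]
    exact MeasurableSet.iInter fun n =>
      measurableSet_le (measurable_pi_apply n) (measurable_pi_apply (n + 1))
  have h3 : MeasurableSet {V : ℕ → ℝ | ∀ j, 1 ≤ j → marg V (j + 1) ≤ marg V j} := by
    have h : {V : ℕ → ℝ | ∀ j, 1 ≤ j → marg V (j + 1) ≤ marg V j}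
        = ⋂ j, ⋂ (_ : 1 ≤ j), {V : ℕ → ℝ | marg V (j + 1) ≤ marg V j} := by
      ext V; simp [Set.mem_iInter]
    rw [h]
    exact MeasurableSet.iInter fun j => MeasurableSet.iInter fun _ =>
      measurableSet_le (marg_meas (j + 1)) (marg_meas j)
  have h4 : MeasurableSet {V : ℕ → ℝ | ∃ N : ℕ, ∀ j, N ≤ j → marg V j = 0} := by
    have h : {V : ℕ → ℝ | ∃ N : ℕ, ∀ j, N ≤ j → marg V j = 0}
        = ⋃ N : ℕ, ⋂ j, ⋂ (_ : N ≤ j), {V : ℕ → ℝ | marg V j = 0} := by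
      ext V; simp [Set.mem_iUnion, Set.mem_iInter]
    rw [h]
    exact MeasurableSet.iUnion fun N => MeasurableSet.iInter fun j =>
      MeasurableSet.iInter fun _ => (marg_meas j) (measurableSet_singleton 0)
  have h : {V : ℕ → ℝ | IsValuation V}
      = {V : ℕ → ℝ | V 0 = 0} ∩ ({V : ℕ → ℝ | Monotone V} ∩
        ({V : ℕ → ℝ | ∀ j, 1 ≤ j → marg V (j + 1) ≤ marg V j} ∩
          {V : ℕ → ℝ | ∃ N : ℕ, ∀ j, N ≤ j → marg V j = 0})) := by
    ext V
    simp only [IsValuation, Set.mem_setOf_eq, Set.mem_inter_iff]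
  rw [h]
  exact h1.inter (h2.inter (h3.inter h4))

lemma val_bound (Q : ℕ → ℝ) (hQ : IsCost Q) (C : ℕ) {V : ℕ → ℝ} (hV : IsValuation V)
    {k : ℕ} (hk : k ≤ C) : ‖V k - Q k‖ ≤ |V C| + |Q C| := by
  have hV0 : 0 ≤ V k := by
    have := hV.2.1 (Nat.zero_le k); rw [hV.1] at this; exact this
  have hVC : V k ≤ V C := hV.2.1 hk
  have hQ0 : 0 ≤ Q k := by
    have := hQ.2.1 (Nat.zero_le k); rw [hQ.1] at this; exact this
  have hQC : Q k ≤ Q C := hQ.2.1 hk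
  rw [Real.norm_eq_abs, abs_sub_le_iff]
  constructor
  · have h1 := le_abs_self (V C); have h2 := abs_nonneg (Q C); linarith
  · have h1 := le_abs_self (Q C); have h2 := abs_nonneg (V C); linarith


/-- for a price floor `p ≤ P(C)`, the safe-price auction `M(C)`
satisfies `W(M(C)) ≥ (1A) + (1B)`. -/
theorem stmt7 (F : Measure (ℕ → ℝ)) (hprob : IsProbabilityMeasure F)
    (hval : F {V | IsValuation V} = 1)
    (hint : ∀ x : ℕ, Integrable (fun V : ℕ → ℝ => V x) F)
    (Q : ℕ → ℝ) (hQ : IsCost Q)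
    (C : ℕ) (hC : 1 ≤ C) (p : ℝ) (hp : 0 ≤ p) (hple : p ≤ safeP Q C) :
    (∫ V, (if (C : ℕ∞) ≤ dem V p then V C - Q C else 0) ∂F) +
      (∫ V, (if dem V p < (C : ℕ∞) then
          V (thetaN Q C p V) - Q (thetaN Q C p V) else 0) ∂F)
      ≤ Wfl F Q (C : ℕ∞) (safeP Q C) := by
  classical
  set P := safeP Q C with hPdef
  -- the three integrands
  set f1 : (ℕ → ℝ) → ℝ := fun V => if (C : ℕ∞) ≤ dem V p then V C - Q C else 0 with hf1def
  set f2 : (ℕ → ℝ) → ℝ := fun V => if dem V p < (C : ℕ∞) then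
      V (thetaN Q C p V) - Q (thetaN Q C p V) else 0 with hf2def
  set h : (ℕ → ℝ) → ℝ := fun V => V (sold (C : ℕ∞) P V) - Q (sold (C : ℕ∞) P V) with hhdef
  -- auxiliary measurable pieces
  have hS1 : MeasurableSet {V : ℕ → ℝ | (C : ℕ∞) ≤ dem V p} := meas_dem_ge p hC
  have hsoldmeas : Measurable fun V : ℕ → ℝ => sold (C : ℕ∞) P V :=
    meas_min_toNat C (fun V => dem V P) fun n hn => meas_dem_ge P hn
  have hthetameas : Measurable fun V : ℕ → ℝ =>
      (min (C : ℕ∞) (min (dem V p) (dem V P))).toNat := by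
    apply meas_min_toNat C (fun V => min (dem V p) (dem V P))
    intro n hn
    have heq : {V : ℕ → ℝ | (n : ℕ∞) ≤ min (dem V p) (dem V P)}
        = {V : ℕ → ℝ | (n : ℕ∞) ≤ dem V p} ∩ {V : ℕ → ℝ | (n : ℕ∞) ≤ dem V P} := by
      ext V; simp [le_min_iff]
    rw [heq]
    exact (meas_dem_ge p hn).inter (meas_dem_ge P hn)
  -- measurability of the integrands
  have hmf1 : Measurable f1 :=
    Measurable.ite hS1 ((measurable_pi_apply C).sub measurable_const) measurable_const
  have hmh : Measurable h := meas_eval_comp Q hsoldmeas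
  have hf2eq : f2 = fun V => if dem V p < (C : ℕ∞) then
      V ((min (C : ℕ∞) (min (dem V p) (dem V P))).toNat)
        - Q ((min (C : ℕ∞) (min (dem V p) (dem V P))).toNat) else 0 := by
    funext V
    simp only [hf2def]
    by_cases hc : dem V p < (C : ℕ∞)
    · rw [if_pos hc, if_pos hc]
      have hle : min (dem V p) (dem V P) ≤ (C : ℕ∞) :=
        le_of_lt (lt_of_le_of_lt (min_le_left _ _) hc)
      rw [show thetaN Q C p V = (min (C : ℕ∞) (min (dem V p) (dem V P))).toNat from by
        rw [min_eq_right hle]; rfl]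
    · rw [if_neg hc, if_neg hc]
  have hmf2 : Measurable f2 := by
    rw [hf2eq]
    have hS1' : MeasurableSet {V : ℕ → ℝ | dem V p < (C : ℕ∞)} := by
      have hcc := hS1.compl
      have he : {V : ℕ → ℝ | (C : ℕ∞) ≤ dem V p}ᶜ = {V : ℕ → ℝ | dem V p < (C : ℕ∞)} := by
        ext V; simp [not_le]
      rwa [he] at hcc
    exact Measurable.ite hS1' (meas_eval_comp Q hthetameas) measurable_const
  -- a.e. valuation
  have haev : ∀ᵐ V ∂F, IsValuation V := by
    rw [ae_iff]
    have hc : {V : ℕ → ℝ | ¬ IsValuation V} = {V : ℕ → ℝ | IsValuation V}ᶜ := rfl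
    rw [hc]
    exact (prob_compl_eq_zero_iff meas_isval).2 hval
  -- integrable bound
  have hB : Integrable (fun V : ℕ → ℝ => |V C| + |Q C|) F :=
    (hint C).abs.add (integrable_const _)
  have hif1 : Integrable f1 F := by
    apply Integrable.mono' hB hmf1.aestronglyMeasurable
    filter_upwards with V
    simp only [hf1def]
    by_cases hc : (C : ℕ∞) ≤ dem V p
    · rw [if_pos hc]
      calc ‖V C - Q C‖ ≤ ‖V C‖ + ‖Q C‖ := norm_sub_le _ _
        _ = |V C| + |Q C| := rfl
    · rw [if_neg hc]; simp [abs_nonneg]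
      positivity
  have hif2 : Integrable f2 F := by
    apply Integrable.mono' hB hmf2.aestronglyMeasurable
    filter_upwards [haev] with V hV
    simp only [hf2def]
    by_cases hc : dem V p < (C : ℕ∞)
    · rw [if_pos hc]
      have hθ : thetaN Q C p V ≤ C :=
        toNat_le_of_lt_coe (lt_of_le_of_lt (min_le_left _ _) hc)
      exact val_bound Q hQ C hV hθ
    · rw [if_neg hc]; simp; positivity
  have hih : Integrable h F := by
    apply Integrable.mono' hB hmh.aestronglyMeasurable
    filter_upwards [haev] with V hV
    exact val_bound Q hQ C hV (min_toNat_le C (dem V P))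
  -- pointwise inequality a.e.
  have hle : (fun V => f1 V + f2 V) ≤ᵐ[F] h := by
    filter_upwards [haev] with V hV
    exact pointwise_key Q hQ C hC p hple V hV
  calc (∫ V, f1 V ∂F) + (∫ V, f2 V ∂F) = ∫ V, (f1 V + f2 V) ∂F :=
        (integral_add hif1 hif2).symm
    _ ≤ ∫ V, h V ∂F := integral_mono_ae (hif1.add hif2) hih hle
    _ = Wfl F Q (C : ℕ∞) (safeP Q C) := rfl

end
end
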